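/- Let ε > 0 and let G be an edge-coloured graph on n vertices with minimum colour degree at least (2/3 + ε)n. Then for every vertex z of G there exist at least εn²/6 unordered pairs {x, x'} of vertices such that z, x, x' form a rainbow triangle (all three edges present with pairwise distinct colours). -/

import Mathlib

open Finset

/-- Every finite set has a subset on which `f` is injective and whose image is the whole image. -/
lemma stmt11_rainbow_subset {α β : Type*} [DecidableEq α] [DecidableEq β]
    (N : Finset α) (f : α → β) :
    ∃ S : Finset α, S ⊆ N ∧ S.card = (N.image f).card ∧
      ∀ a ∈ S, ∀ b ∈ S, f a = f b → a = b := by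
  classical
  induction N using Finset.induction_on with
  | empty => exact ⟨∅, by simp⟩
  | @insert a N ha ih =>
    obtain ⟨S, hSN, hcard, hinj⟩ := ih
    by_cases hfa : f a ∈ N.image f
    · refine ⟨S, hSN.trans (subset_insert _ _), ?_, hinj⟩
      rw [image_insert, insert_eq_self.2 hfa, hcard]
    · refine ⟨insert a S, insert_subset_insert _ hSN, ?_, ?_⟩
      · rw [image_insert, card_insert_of_notMem hfa,
          card_insert_of_notMem (fun h => ha (hSN h)), hcard]
      · intro x hx y hy hxy
        rcases mem_insert.1 hx with h1 | h1
        · rcases mem_insert.1 hy with h2 | h2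
          · rw [h1, h2]
          · refine absurd ?_ hfa
            rw [← h1, hxy]
            exact mem_image_of_mem f (hSN h2)
        · rcases mem_insert.1 hy with h2 | h2
          · refine absurd ?_ hfa
            rw [← h2, ← hxy]
            exact mem_image_of_mem f (hSN h1)
          · exact hinj x h1 y h2 hxy

/-- In an edge-coloured graph with minimum colour degree at least `(2/3 + ε)n`, every
vertex `z` lies in at least `εn²/6` rainbow triangles, counted as unordered pairs. -/
theorem stmt_11 (n : ℕ) (ε : ℝ) (hε : 0 < ε) (G : SimpleGraph (Fin n))
    (c : Fin n → Fin n → ℕ) (hsym : ∀ u v, c u v = c v u)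
    (hdeg : ∀ v : Fin n, (2 / 3 + ε) * n ≤ (Set.ncard ((c v) '' {w | G.Adj v w}) : ℝ))
    (z : Fin n) :
    ε * n ^ 2 / 6 ≤
      (Set.ncard {p : Finset (Fin n) | ∃ x x' : Fin n, p = {x, x'} ∧ x ≠ x' ∧
        G.Adj z x ∧ G.Adj z x' ∧ G.Adj x x' ∧
        c z x ≠ c z x' ∧ c z x ≠ c x x' ∧ c z x' ≠ c x x'} : ℝ) := by
  classical
  have hn : (0:ℕ) < n := z.pos
  -- neighborhoods and colour degrees
  set Nb : Fin n → Finset (Fin n) := fun v => Finset.univ.filter (fun w => G.Adj v w) with hNbdef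
  have hNb : ∀ v w, w ∈ Nb v ↔ G.Adj v w := by intro v w; simp [hNbdef]
  set d : Fin n → ℕ := fun v => ((Nb v).image (c v)).card with hddef
  have hdeg' : ∀ v, (2/3 + ε) * n ≤ (d v : ℝ) := by
    intro v
    have h1 : (c v) '' {w | G.Adj v w} = ↑((Nb v).image (c v)) := by
      rw [Finset.coe_image]
      ext w
      simp [hNbdef]
    have h2 := hdeg v
    rw [h1, Set.ncard_coe_finset] at h2
    exact h2
  have hdegn : ∀ v, (Nb v).card < n := by
    intro v
    have hsub : Nb v ⊆ Finset.univ.erase v := by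
      intro w hw
      rw [Finset.mem_erase]
      exact ⟨fun h => G.irrefl (h ▸ (hNb v w).1 hw), Finset.mem_univ w⟩
    calc (Nb v).card ≤ (Finset.univ.erase v).card := Finset.card_le_card hsub
      _ = n - 1 := by
          rw [Finset.card_erase_of_mem (Finset.mem_univ v), Finset.card_univ, Fintype.card_fin]
      _ < n := by omega
  -- rainbow representative sets
  have hRex : ∀ v : Fin n, ∃ S, S ⊆ Nb v ∧ S.card = d v ∧
      ∀ a ∈ S, ∀ b ∈ S, c v a = c v b → a = b :=
    fun v => stmt11_rainbow_subset (Nb v) (c v)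
  choose R hRsub hRcard hRinj using hRex
  set T : Fin n → Finset (Fin n) := fun x => (R x).filter (fun w => c x w ≠ c x z) with hTdef
  have hTcard : ∀ x, d x ≤ (T x).card + 1 := by
    intro x
    have h1 : ((R x).filter (fun w => c x w = c x z)).card ≤ 1 := by
      rw [Finset.card_le_one]
      intro a ha b hb
      rw [Finset.mem_filter] at ha hb
      exact hRinj x a ha.1 b hb.1 (ha.2.trans hb.2.symm)
    have h2 := Finset.card_filter_add_card_filter_not
      (s := R x) (p := fun w => c x w = c x z)
    have h3 : (R x).filter (fun w => ¬ c x w = c x z) = T x := rfl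
    rw [h3, hRcard] at h2
    omega
  have hzT : ∀ x, z ∉ T x := by
    intro x hzz
    rw [hTdef] at hzz
    simp only [Finset.mem_filter] at hzz
    exact hzz.2 rfl
  have hzR : z ∉ R z := fun h => G.irrefl ((hNb z z).1 (hRsub z h))
  -- monochromatic star bound
  have hstar : ∀ y : Fin n, ((Nb y).filter (fun x => c y x = c z y)).card + d y ≤ n := by
    intro y
    have h2 := Finset.card_filter_add_card_filter_not
      (s := Nb y) (p := fun x => c y x = c z y)
    have him : (((Nb y).image (c y)).erase (c z y)) ⊆
        ((Nb y).filter (fun x => ¬ c y x = c z y)).image (c y) := by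
      intro γ hγ
      rw [Finset.mem_erase] at hγ
      obtain ⟨hne, hγ'⟩ := hγ
      obtain ⟨w, hw, rfl⟩ := Finset.mem_image.1 hγ'
      exact Finset.mem_image_of_mem _ (Finset.mem_filter.2 ⟨hw, fun h => hne h⟩)
    have h4 : d y ≤ ((Nb y).filter (fun x => ¬ c y x = c z y)).card + 1 := by
      have h5 := Finset.card_le_card him
      have h6 := Finset.card_image_le (s := (Nb y).filter (fun x => ¬ c y x = c z y)) (f := c y)
      have h7 := Finset.card_erase_eq_ite (a := c z y) (s := (Nb y).image (c y))
      have hdy : d y = ((Nb y).image (c y)).card := rfl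
      rw [hdy]
      split_ifs at h7 with hmem
      · have : 0 < ((Nb y).image (c y)).card := Finset.card_pos.2 ⟨_, hmem⟩
        omega
      · omega
    have h8 := hdegn y
    omega
  -- intersection bound
  have hint : ∀ x, (R z).card + d x ≤ n + ((R z) ∩ T x).card := by
    intro x
    have hsub : (R z) ∪ T x ⊆ Finset.univ.erase z := by
      intro a ha
      rw [Finset.mem_erase]
      refine ⟨?_, Finset.mem_univ a⟩
      rintro rfl
      rcases Finset.mem_union.1 ha with h | h
      · exact hzR h
      · exact hzT x h
    have h1 : ((R z) ∪ T x).card ≤ n - 1 := by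
      calc ((R z) ∪ T x).card ≤ (Finset.univ.erase z).card := Finset.card_le_card hsub
        _ = n - 1 := by
            rw [Finset.card_erase_of_mem (Finset.mem_univ z), Finset.card_univ, Fintype.card_fin]
    have h2 := Finset.card_union_add_card_inter (R z) (T x)
    have h3 := hTcard x
    omega
  -- the good pairs
  set good : Fin n → Finset (Fin n) :=
    fun x => ((R z) ∩ T x).filter (fun x' => ¬ c x x' = c z x') with hgooddef
  set bad : Fin n → Finset (Fin n) :=
    fun x => ((R z) ∩ T x).filter (fun x' => c x x' = c z x') with hbaddef
  have hsplit : ∀ x, (bad x).card + (good x).card = ((R z) ∩ T x).card := by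
    intro x
    exact Finset.card_filter_add_card_filter_not
      (s := (R z) ∩ T x) (p := fun x' => c x x' = c z x')
  set Good : Finset (Fin n × Fin n) :=
    (R z).biUnion (fun x => (good x).image (fun x' => (x, x'))) with hGooddef
  have hGoodcard : Good.card = ∑ x ∈ R z, (good x).card := by
    rw [hGooddef, Finset.card_biUnion]
    · exact Finset.sum_congr rfl fun x _ =>
        Finset.card_image_of_injective _ (fun a b h => by
          simpa using congrArg Prod.snd h)
    · intro x _ y _ hxy
      rw [Function.onFun, Finset.disjoint_left]
      rintro ⟨a, b⟩ h1 h2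
      obtain ⟨a1, _, he1⟩ := Finset.mem_image.1 h1
      obtain ⟨a2, _, he2⟩ := Finset.mem_image.1 h2
      apply hxy
      have := (congrArg Prod.fst he1).trans (congrArg Prod.fst he2).symm
      simpa using this
  -- bound on the bad pairs
  have hbadsum : (∑ x ∈ R z, (bad x).card) + (∑ x ∈ R z, d x) ≤ (R z).card * n := by
    have hbad1 : ∀ x, bad x = (R z).filter (fun x' => x' ∈ T x ∧ c x x' = c z x') := by
      intro x
      rw [hbaddef]
      ext a
      simp only [Finset.mem_filter, Finset.mem_inter]
      tauto
    have hswap : (∑ x ∈ R z, (bad x).card)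
        = ∑ x' ∈ R z, ((R z).filter (fun x => x' ∈ T x ∧ c x x' = c z x')).card := by
      have e1 : (∑ x ∈ R z, (bad x).card)
          = ∑ x ∈ R z, ∑ x' ∈ R z, (if x' ∈ T x ∧ c x x' = c z x' then 1 else 0) := by
        refine Finset.sum_congr rfl fun x _ => ?_
        rw [hbad1, Finset.card_filter]
      rw [e1, Finset.sum_comm]
      refine Finset.sum_congr rfl fun x' _ => ?_
      rw [Finset.card_filter]
    rw [hswap]
    have hper : ∀ x' ∈ R z,
        ((R z).filter (fun x => x' ∈ T x ∧ c x x' = c z x')).card + d x' ≤ n := by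
      intro x' _
      have hsub : (R z).filter (fun x => x' ∈ T x ∧ c x x' = c z x')
          ⊆ (Nb x').filter (fun x => c x' x = c z x') := by
        intro x hx
        rw [Finset.mem_filter] at hx ⊢
        obtain ⟨_, hxT, hcc⟩ := hx
        have hadj : G.Adj x x' := (hNb x x').1 (hRsub x (Finset.filter_subset _ _ hxT))
        exact ⟨(hNb x' x).2 hadj.symm, (hsym x' x).trans hcc⟩
      have := Finset.card_le_card hsub
      have := hstar x'
      omega
    calc (∑ x' ∈ R z, ((R z).filter (fun x => x' ∈ T x ∧ c x x' = c z x')).card)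
          + (∑ x' ∈ R z, d x')
        = ∑ x' ∈ R z, (((R z).filter (fun x => x' ∈ T x ∧ c x x' = c z x')).card + d x') := by
          rw [Finset.sum_add_distrib]
      _ ≤ ∑ x' ∈ R z, n := Finset.sum_le_sum hper
      _ = (R z).card * n := by rw [Finset.sum_const, smul_eq_mul]
  -- membership facts for good pairs
  have hGoodmem : ∀ p : Fin n × Fin n, p ∈ Good →
      p.1 ∈ R z ∧ p.2 ∈ R z ∧ p.2 ∈ T p.1 ∧ ¬ c p.1 p.2 = c z p.2 := by
    rintro ⟨a, b⟩ hp
    rw [hGooddef] at hp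
    obtain ⟨x, hx, hab⟩ := Finset.mem_biUnion.1 hp
    obtain ⟨x', hx', heq⟩ := Finset.mem_image.1 hab
    have ha : a = x := (congrArg Prod.fst heq).symm
    have hb : b = x' := (congrArg Prod.snd heq).symm
    subst ha; subst hb
    rw [hgooddef] at hx'
    rw [Finset.mem_filter, Finset.mem_inter] at hx'
    exact ⟨hx, hx'.1.1, hx'.1.2, hx'.2⟩
  have hGprops : ∀ p : Fin n × Fin n, p ∈ Good →
      p.1 ≠ p.2 ∧ G.Adj z p.1 ∧ G.Adj z p.2 ∧ G.Adj p.1 p.2 ∧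
      c z p.1 ≠ c z p.2 ∧ c z p.1 ≠ c p.1 p.2 ∧ c z p.2 ≠ c p.1 p.2 := by
    rintro ⟨x, x'⟩ hp
    obtain ⟨hx, hx', hxT, hcc⟩ := hGoodmem _ hp
    have hadjxx' : G.Adj x x' :=
      (hNb x x').1 (hRsub x (Finset.filter_subset _ _ hxT))
    have hne : x ≠ x' := G.ne_of_adj hadjxx'
    have hTcol : ¬ c x x' = c x z := by
      rw [hTdef] at hxT
      exact (Finset.mem_filter.1 hxT).2
    refine ⟨hne, (hNb z x).1 (hRsub z hx), (hNb z x').1 (hRsub z hx'), hadjxx', ?_, ?_, ?_⟩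
    · exact fun h => hne (hRinj z x hx x' hx' h)
    · intro h
      exact hTcol (h.symm.trans (hsym z x) ▸ rfl)
    · exact fun h => hcc h.symm
  -- packaging into unordered pairs
  set pairF : Fin n × Fin n → Finset (Fin n) := fun p => {p.1, p.2} with hpairF
  have hfiber : ∀ q ∈ Good.image pairF,
      (Good.filter (fun p => pairF p = q)).card ≤ 2 := by
    intro q hq
    obtain ⟨a, _, rfl⟩ := Finset.mem_image.1 hq
    have hsubs : Good.filter (fun p => pairF p = pairF a)
        ⊆ ({(a.1, a.2), (a.2, a.1)} : Finset (Fin n × Fin n)) := by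
      intro p hp
      rw [Finset.mem_filter] at hp
      obtain ⟨hpG, hpq⟩ := hp
      have hpne : p.1 ≠ p.2 := (hGprops p hpG).1
      have h1 : p.1 ∈ pairF p := by simp [hpairF]
      have h2 : p.2 ∈ pairF p := by simp [hpairF]
      rw [hpq] at h1 h2
      simp only [hpairF, Finset.mem_insert, Finset.mem_singleton] at h1 h2
      simp only [Finset.mem_insert, Finset.mem_singleton]
      rcases h1 with h1 | h1 <;> rcases h2 with h2 | h2
      · exact absurd (h1.trans h2.symm) hpne
      · left; exact Prod.ext h1 h2
      · right; exact Prod.ext h1 h2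
      · exact absurd (h1.trans h2.symm) hpne
    calc (Good.filter (fun p => pairF p = pairF a)).card
        ≤ ({(a.1, a.2), (a.2, a.1)} : Finset (Fin n × Fin n)).card :=
          Finset.card_le_card hsubs
      _ ≤ 2 := by
          refine (Finset.card_insert_le _ _).trans ?_
          simp
  have h2card : Good.card ≤ 2 * (Good.image pairF).card :=
    Finset.card_le_mul_card_image Good 2 hfiber
  -- the image lands in the target set
  set P : Set (Finset (Fin n)) := {p : Finset (Fin n) | ∃ x x' : Fin n, p = {x, x'} ∧ x ≠ x' ∧
      G.Adj z x ∧ G.Adj z x' ∧ G.Adj x x' ∧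
      c z x ≠ c z x' ∧ c z x ≠ c x x' ∧ c z x' ≠ c x x'} with hPdef
  have himsub : ↑(Good.image pairF) ⊆ P := by
    intro q hq
    rw [Finset.mem_coe] at hq
    obtain ⟨p, hp, rfl⟩ := Finset.mem_image.1 hq
    obtain ⟨hne, h1, h2, h3, h4, h5, h6⟩ := hGprops p hp
    exact ⟨p.1, p.2, rfl, hne, h1, h2, h3, h4, h5, h6⟩
  have hncard : ((Good.image pairF).card : ℝ) ≤ (Set.ncard P : ℝ) := by
    have := Set.ncard_le_ncard himsub (Set.toFinite P)
    rw [Set.ncard_coe_finset] at this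
    exact_mod_cast this
  -- real arithmetic assembly
  set s : ℕ := (R z).card with hsdef
  have hsd : s = d z := hRcard z
  have hsD : (2/3 + ε) * n ≤ (s : ℝ) := by rw [hsd]; exact_mod_cast hdeg' z
  have eGood : (Good.card : ℝ) = ∑ x ∈ R z, ((good x).card : ℝ) := by
    rw [hGoodcard]
    exact Nat.cast_sum _ _
  have hsum1 : (s : ℝ) * s + (∑ x ∈ R z, (d x : ℝ))
      ≤ (s : ℝ) * n + (Good.card : ℝ) + (∑ x ∈ R z, ((bad x).card : ℝ)) := by
    have e1 : ∀ x ∈ R z, (s : ℝ) + (d x : ℝ)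
        ≤ (n : ℝ) + ((good x).card : ℝ) + ((bad x).card : ℝ) := by
      intro x _
      have h1 := hint x
      have h2 := hsplit x
      have h3 : s + d x ≤ n + #(good x) + #(bad x) := by omega
      exact_mod_cast h3
    have e2 := Finset.sum_le_sum e1
    have e4 : ∑ x ∈ R z, ((s : ℝ) + (d x : ℝ)) = (s : ℝ) * s + ∑ x ∈ R z, (d x : ℝ) := by
      rw [Finset.sum_add_distrib, Finset.sum_const, nsmul_eq_mul, ← hsdef]
    have e5 : ∑ x ∈ R z, ((n : ℝ) + ((good x).card : ℝ) + ((bad x).card : ℝ))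
        = (s : ℝ) * n + (∑ x ∈ R z, ((good x).card : ℝ))
          + (∑ x ∈ R z, ((bad x).card : ℝ)) := by
      rw [Finset.sum_add_distrib, Finset.sum_add_distrib, Finset.sum_const, nsmul_eq_mul,
        ← hsdef]
    calc (s : ℝ) * s + (∑ x ∈ R z, (d x : ℝ))
        = ∑ x ∈ R z, ((s : ℝ) + (d x : ℝ)) := e4.symm
      _ ≤ ∑ x ∈ R z, ((n : ℝ) + ((good x).card : ℝ) + ((bad x).card : ℝ)) := e2
      _ = (s : ℝ) * n + (∑ x ∈ R z, ((good x).card : ℝ))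
            + (∑ x ∈ R z, ((bad x).card : ℝ)) := e5
      _ = (s : ℝ) * n + (Good.card : ℝ) + (∑ x ∈ R z, ((bad x).card : ℝ)) := by
          rw [eGood]
  have hsum2 : (∑ x ∈ R z, ((bad x).card : ℝ)) + (∑ x ∈ R z, (d x : ℝ)) ≤ (s : ℝ) * n := by
    have h2 : ((∑ x ∈ R z, (bad x).card : ℕ) : ℝ) + ((∑ x ∈ R z, d x : ℕ) : ℝ)
        ≤ ((s * n : ℕ) : ℝ) := by exact_mod_cast hbadsum
    push_cast at h2
    exact h2
  have hsumd : (s : ℝ) * ((2/3 + ε) * n) ≤ ∑ x ∈ R z, (d x : ℝ) := by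
    calc (s : ℝ) * ((2/3 + ε) * n) = ∑ _x ∈ R z, ((2/3 + ε) * (n : ℝ)) := by
          rw [Finset.sum_const, nsmul_eq_mul, ← hsdef]
      _ ≤ ∑ x ∈ R z, (d x : ℝ) := Finset.sum_le_sum fun x _ => hdeg' x
  -- conclude
  have hnn : (0:ℝ) ≤ (n:ℝ) := Nat.cast_nonneg n
  have hGoodbig : 2 * ε * (n:ℝ)^2 ≤ (Good.card : ℝ) := by
    have h1 : (s:ℝ) * s + 2 * ((s:ℝ) * ((2/3 + ε) * n)) - 2 * (s:ℝ) * n ≤ (Good.card : ℝ) := by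
      linarith [hsum1, hsum2, hsumd]
    nlinarith [h1, hsD, hε.le, hnn, sq_nonneg (ε * (n:ℝ)),
      sq_nonneg ((s:ℝ) - (2/3 + ε) * n),
      mul_nonneg (sub_nonneg.2 hsD) hnn,
      mul_nonneg (sub_nonneg.2 hsD) (mul_nonneg hε.le hnn)]
  have hfinal : (Good.card : ℝ) ≤ 2 * (Set.ncard P : ℝ) := by
    have h1 : (Good.card : ℝ) ≤ 2 * ((Good.image pairF).card : ℝ) := by exact_mod_cast h2card
    linarith [hncard]
  have hmono : ε * (n:ℝ)^2 / 6 ≤ ε * (n:ℝ)^2 := by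
    nlinarith [mul_nonneg (le_of_lt hε) (sq_nonneg (n:ℝ))]
  calc ε * (n:ℝ)^2 / 6 ≤ ε * (n:ℝ)^2 := hmono
    _ ≤ (Good.card : ℝ) / 2 := by linarith [hGoodbig]
    _ ≤ (Set.ncard P : ℝ) := by linarith [hfinal]
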